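/- arXiv:2202.12380 — 3 statements merged into one kernel-verified Lean document; each statement's English description precedes it below -/
import Mathlib

section
/- Assume in addition that x ≠ 0 and let 0 < E < 1. Then for every natural number k with k > log(E)/log(1 − q), the residual of the approximate coefficient-domain matching pursuit with resets satisfies ‖r_k‖₂² < E·‖x‖₂²; in particular, the algorithm with stopping condition ‖r_k‖₂² ≤ E·‖x‖₂² terminates after finitely many selection steps, achieving the desired approximation error. -/
open scoped BigOperators
open ComplexConjugate

/-- The inner product `⟨u,v⟩ = ∑ l, u l * conj (v l)`. -/
noncomputable def cip {L : ℕ} (u v : Fin L → ℂ) : ℂ := ∑ l, u l * conj (v l)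

/-- The Euclidean norm `‖u‖₂ = √(∑ l, |u l|²)`. -/
noncomputable def nrm {L : ℕ} (u : Fin L → ℂ) : ℝ := Real.sqrt (∑ l, ‖u l‖ ^ 2)

lemma cip_sub_mul {L : ℕ} (u v w : Fin L → ℂ) (c : ℂ) :
    cip (fun l => u l - c * v l) w = cip u w - c * cip v w := by
  simp [cip, sub_mul, Finset.sum_sub_distrib, Finset.mul_sum, mul_assoc]

lemma cip_const_mul {L : ℕ} (c : ℂ) (u v : Fin L → ℂ) :
    cip (fun l => c * u l) v = c * cip u v := by
  simp [cip, Finset.mul_sum, mul_assoc]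

lemma cip_zero {L : ℕ} (v : Fin L → ℂ) : cip 0 v = 0 := by simp [cip]

lemma nrm_eq_norm {L : ℕ} (u : Fin L → ℂ) : nrm u = ‖(WithLp.equiv 2 (Fin L → ℂ)).symm u‖ := by
  simp [nrm, EuclideanSpace.norm_eq]

lemma cip_eq_inner {L : ℕ} (u v : Fin L → ℂ) :
    cip u v = @inner ℂ _ _ ((WithLp.equiv 2 (Fin L → ℂ)).symm v) ((WithLp.equiv 2 (Fin L → ℂ)).symm u) := by
  simp [cip, PiLp.inner_apply, RCLike.inner_apply, mul_comm]

lemma abs_step (a c : ℂ) (δ : ℝ) (h : ‖a - c‖ ≤ δ * ‖c‖) :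
    -(2 * Complex.re (c * conj a)) + ‖c‖ ^ 2 ≤ -((1 - 2*δ) * ‖c‖ ^ 2) := by
  have h2 : Complex.re (c * conj c) = ‖c‖ ^ 2 := by
    rw [Complex.mul_conj]; simp [Complex.sq_norm]
  have h3 : -Complex.re (c * conj (a - c)) ≤ δ * ‖c‖ ^ 2 := by
    have h5 := Complex.abs_re_le_norm (c * conj (a - c))
    have habs : ‖c * conj (a - c)‖ ≤ ‖c‖ * (δ * ‖c‖) := by
      rw [norm_mul, Complex.norm_conj]
      exact mul_le_mul_of_nonneg_left h (norm_nonneg c)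
    have h6 := abs_le.mp (le_trans h5 habs)
    nlinarith [h6.1]
  have h4 : Complex.re (c * conj a) = ‖c‖ ^ 2 + Complex.re (c * conj (a - c)) := by
    have h1 : c * conj a = c * conj c + c * conj (a - c) := by rw [map_sub]; ring
    rw [h1, Complex.add_re, h2]
  linarith

lemma eucl_zero_of_cip_span {L P : ℕ} (d : Fin P → (Fin L → ℂ)) (y : Fin L → ℂ)
    (hspan : Submodule.span ℂ (Set.range d) = ⊤)
    (h0 : ∀ i, cip y (d i) = 0) : y = 0 := by
  have key : ∀ v ∈ Submodule.span ℂ (Set.range d), cip y v = 0 := by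
    intro v hv
    induction hv using Submodule.span_induction with
    | mem v hv => obtain ⟨i, rfl⟩ := hv; exact h0 i
    | zero => simp [cip]
    | add v w _ _ hv hw =>
        simp [cip, Pi.add_apply, mul_add, Finset.sum_add_distrib] at *; rw [hv, hw]; ring
    | smul c v _ hv =>
        have : cip y (c • v) = conj c * cip y v := by
          simp [cip, Finset.mul_sum]; ring_nf
          simp [mul_comm, mul_left_comm]
        rw [this, hv, mul_zero]
  have hyy : cip y y = 0 := key y (by rw [hspan]; trivial)
  have hsum : ∑ l, Complex.normSq (y l) = 0 := by
    have h2 : (↑(∑ l, Complex.normSq (y l)) : ℂ) = 0 := by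
      push_cast
      simpa only [cip, Complex.mul_conj] using hyy
    exact_mod_cast h2
  funext l
  have hl : Complex.normSq (y l) = 0 :=
    (Finset.sum_eq_zero_iff_of_nonneg (fun _ _ => Complex.normSq_nonneg _)).mp hsum l
      (Finset.mem_univ l)
  simpa using Complex.normSq_eq_zero.mp hl

set_option maxHeartbeats 1000000 in
/-- Corollary 1 of the paper: if additionally `x ≠ 0` and `0 < E < 1`,
then for every natural number `k` with `k > log(E)/log(1 − q)`, the residual of
approximate coefficient-domain matching pursuit with resets satisfies
`‖r_k‖₂² < E·‖x‖₂²`; in particular, the algorithm with stopping condition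
`‖r_k‖₂² ≤ E·‖x‖₂²` terminates after finitely many selection steps.

Here `cpre k`, `ppre (k+1)`, `koutpre k` denote the pre-reset quantities `ĉ_k`, `p_{k+1}`,
`k°_k` at step `k`, `R k` is the reset criterion evaluated on them, and `chat k`,
`p (k+1)`, `kout k` are the corresponding effective (post-reset) quantities used in
the update. -/
theorem approx_cdmp_with_resets_terminates
    {L P : ℕ} (hL : 0 < L) (hP : 0 < P)
    (x : Fin L → ℂ) (hx : x ≠ 0) (D : Matrix (Fin L) (Fin P) ℂ)
    (hDnorm : ∀ i, nrm (fun l => D l i) = 1)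
    (hspan : Submodule.span ℂ (Set.range fun i => (fun l => D l i)) = ⊤)
    (lammin : ℝ)
    (hlam : lammin = ⨅ y : {y : Fin L → ℂ // nrm y = 1},
      ⨆ i : Fin P, ‖cip (y : Fin L → ℂ) (fun l => D l i)‖ ^ 2)
    (ε δ ϵ' q : ℝ)
    (hε0 : 0 < ε) (hε1 : ε < 1)
    (hδ0 : 0 < δ) (hδ : δ < 1 / 2)
    (hϵ'0 : 0 < ϵ') (hϵ' : ϵ' < 1 - 2 * δ)
    (hconstr : 2 * δ / (1 - (2 * δ + ϵ')) < Real.sqrt lammin)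
    (hq : q = ϵ' / (1 + δ) ^ 2 * lammin)
    (G Gε : Matrix (Fin P) (Fin P) ℂ)
    (hG : ∀ i j, G i j = cip (fun l => D l j) (fun l => D l i))
    (hGε : ∀ i j, Gε i j = if ε < ‖G i j‖ then G i j else 0)
    (c cpre chat : ℕ → Fin P → ℂ) (ppre p : ℕ → Fin P) (koutpre kout : ℕ → ℕ)
    (r : ℕ → Fin L → ℂ) (hr : ∀ k, r k = x - D.mulVec (c k))
    (S : ℕ → ℝ)
    (hS : ∀ k, S k = ∑ l ∈ Finset.Icc (koutpre k + 1) k, ‖chat (l - 1) (p l)‖)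
    (R : ℕ → Prop)
    (hR : ∀ k, R k ↔
      (‖cpre k (ppre (k + 1))‖ < ε / δ * S k ∨
        ‖cpre k (ppre (k + 1))‖ <
          2 * δ * (1 - q) ^ (((koutpre k : ℝ) - (k : ℝ)) / 2) / (1 - (2 * δ + ϵ')) *
            nrm (r (koutpre k))))
    (hc0 : c 0 = 0)
    (hcpre0 : ∀ i, cpre 0 i = cip x (fun l => D l i))
    (hkoutpre0 : koutpre 0 = 0)
    (hppre : ∀ k i, ‖cpre k i‖ ≤ ‖cpre k (ppre (k + 1))‖)
    (hresetT : ∀ k, R k → (chat k = fun i => cip (r k) (fun l => D l i)) ∧ kout k = k)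
    (hresetF : ∀ k, ¬ R k → chat k = cpre k ∧ p (k + 1) = ppre (k + 1) ∧ kout k = koutpre k)
    (hp : ∀ k i, ‖chat k i‖ ≤ ‖chat k (p (k + 1))‖)
    (hcrec : ∀ k, c (k + 1) = c k + Pi.single (p (k + 1)) (chat k (p (k + 1))))
    (hcprerec : ∀ k, cpre (k + 1) = fun i => chat k i - chat k (p (k + 1)) * Gε i (p (k + 1)))
    (hkoutrec : ∀ k, koutpre (k + 1) = kout k)
    (E : ℝ) (hE0 : 0 < E) (hE1 : E < 1) :
    ∀ k : ℕ, Real.log E / Real.log (1 - q) < (k : ℝ) →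
      nrm (r k) ^ 2 < E * nrm x ^ 2 := by
  have instL : Nonempty (Fin L) := ⟨⟨0, hL⟩⟩
  have instP : Nonempty (Fin P) := ⟨⟨0, hP⟩⟩
  set d : Fin P → Fin L → ℂ := fun i l => D l i with hd
  set f : (Fin L → ℂ) → ℝ := fun y => ⨆ i, ‖cip y (d i)‖ ^ 2 with hf
  -- basic facts about f
  have hbdd : ∀ y : Fin L → ℂ, BddAbove (Set.range fun i => ‖cip y (d i)‖ ^ 2) :=
    fun y => Set.Finite.bddAbove (Set.finite_range _)
  have hterm_le : ∀ (y : Fin L → ℂ) (i : Fin P), ‖cip y (d i)‖ ^ 2 ≤ f y :=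
    fun y i => le_ciSup (hbdd y) i
  have hf_le : ∀ (y : Fin L → ℂ) (b : ℝ),
      (∀ i, ‖cip y (d i)‖ ^ 2 ≤ b) → f y ≤ b := fun y b h => ciSup_le h
  have hf_nonneg : ∀ y, 0 ≤ f y := fun y => le_trans (sq_nonneg _) (hterm_le y (Classical.arbitrary _))
  -- lammin ≤ f y for unit y
  have hlam_le : ∀ y : Fin L → ℂ, nrm y = 1 → lammin ≤ f y := by
    intro y hy
    rw [hlam]
    have hbb : BddBelow (Set.range fun y : {y : Fin L → ℂ // nrm y = 1} =>
        ⨆ i : Fin P, ‖cip (y : Fin L → ℂ) (d i)‖ ^ 2) := by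
      refine ⟨0, ?_⟩
      rintro _ ⟨z, rfl⟩
      exact hf_nonneg _
    exact ciInf_le hbb ⟨y, hy⟩
  -- a canonical unit vector
  have hsphere_ne : ∃ y : Fin L → ℂ, nrm y = 1 := by
    refine ⟨fun l => if l = ⟨0, hL⟩ then 1 else 0, ?_⟩
    simp [nrm, apply_ite (fun z : ℂ => ‖z‖), Finset.sum_ite_eq']
  -- lammin ≤ 1
  have hDnorm' : ∀ i, ‖(WithLp.equiv 2 (Fin L → ℂ)).symm (d i)‖ = 1 := fun i => by rw [← nrm_eq_norm]; exact hDnorm i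
  have hlamle1 : lammin ≤ 1 := by
    obtain ⟨y1, hy1⟩ := hsphere_ne
    refine le_trans (hlam_le y1 hy1) (hf_le _ _ fun i => ?_)
    have := norm_inner_le_norm (𝕜 := ℂ) ((WithLp.equiv 2 (Fin L → ℂ)).symm (d i)) ((WithLp.equiv 2 (Fin L → ℂ)).symm y1)
    rw [hDnorm' i, ← nrm_eq_norm, hy1] at this
    rw [cip_eq_inner]
    calc ‖@inner ℂ _ _ ((WithLp.equiv 2 (Fin L → ℂ)).symm (d i)) ((WithLp.equiv 2 (Fin L → ℂ)).symm y1)‖ ^ 2 ≤ 1 ^ 2 := by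
          apply pow_le_pow_left₀ (norm_nonneg _) (by simpa using this)
      _ = 1 := one_pow 2
  -- positivity of lammin
  have hlampos : 0 < lammin := by
    set g : EuclideanSpace ℂ (Fin L) → ℝ :=
      fun y => ∑ i, ‖cip ((WithLp.equiv 2 (Fin L → ℂ)) y) (d i)‖ ^ 2 with hg
    have hcont : Continuous g := by
      apply continuous_finset_sum
      intro i _
      apply Continuous.pow
      apply continuous_norm.comp
      unfold cip
      apply continuous_finset_sum
      intro l _
      exact (((continuous_apply l).comp (PiLp.continuous_ofLp 2 (fun _ : Fin L => ℂ)))).mul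
        continuous_const
    have hcomp : IsCompact (Metric.sphere (0 : EuclideanSpace ℂ (Fin L)) 1) := isCompact_sphere 0 1
    have hne : (Metric.sphere (0 : EuclideanSpace ℂ (Fin L)) 1).Nonempty :=
      NormedSpace.sphere_nonempty.mpr (by norm_num)
    obtain ⟨y₀, hy₀mem, hminOn⟩ := hcomp.exists_isMinOn hne hcont.continuousOn
    have hy₀norm : ‖y₀‖ = 1 := by simpa using hy₀mem
    have hy₀ne : (WithLp.equiv 2 (Fin L → ℂ)) y₀ ≠ 0 := by
      intro h
      have : y₀ = 0 := (WithLp.equiv 2 (Fin L → ℂ)).injective (by rw [h]; rfl)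
      rw [this] at hy₀norm; simp at hy₀norm
    have hg0 : 0 < g y₀ := by
      rcases lt_or_eq_of_le (Finset.sum_nonneg (fun i _ => sq_nonneg
        (‖cip ((WithLp.equiv 2 (Fin L → ℂ)) y₀) (d i)‖))) with h | h
      · exact h
      · exfalso
        apply hy₀ne
        apply eucl_zero_of_cip_span d _ hspan
        intro i
        have := (Finset.sum_eq_zero_iff_of_nonneg (fun i _ => sq_nonneg
          (‖cip ((WithLp.equiv 2 (Fin L → ℂ)) y₀) (d i)‖))).mp h.symm i
          (Finset.mem_univ i)
        have := pow_eq_zero_iff (n := 2) (by norm_num) |>.mp this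
        simpa using this
    have hfg : ∀ y : Fin L → ℂ, nrm y = 1 → g y₀ / P ≤ f y := by
      intro y hy
      have hym : (WithLp.equiv 2 (Fin L → ℂ)).symm y ∈ Metric.sphere (0 : EuclideanSpace ℂ (Fin L)) 1 := by
        rw [Metric.mem_sphere, dist_zero_right, ← nrm_eq_norm]
        exact hy
      have hgy : g ((WithLp.equiv 2 (Fin L → ℂ)).symm y) ≤ P * f y := by
        rw [hg]
        calc ∑ i, ‖cip ((WithLp.equiv 2 (Fin L → ℂ)) ((WithLp.equiv 2 (Fin L → ℂ)).symm y)) (d i)‖ ^ 2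
            ≤ ∑ _i : Fin P, f y := Finset.sum_le_sum (fun i _ => hterm_le y i)
          _ = P * f y := by simp [Finset.sum_const, nsmul_eq_mul]
      have hmin := hminOn hym
      have hP' : (0:ℝ) < P := by exact_mod_cast hP
      rw [div_le_iff₀ hP']
      calc g y₀ ≤ g ((WithLp.equiv 2 (Fin L → ℂ)).symm y) := hmin
        _ ≤ P * f y := hgy
        _ = f y * P := mul_comm _ _
    have : g y₀ / P ≤ lammin := by
      rw [hlam]
      obtain ⟨y1, hy1⟩ := hsphere_ne
      have : Nonempty {y : Fin L → ℂ // nrm y = 1} := ⟨⟨y1, hy1⟩⟩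
      exact le_ciInf fun z => hfg z z.2
    have hP' : (0:ℝ) < P := by exact_mod_cast hP
    exact lt_of_lt_of_le (div_pos hg0 hP') this
  -- q bounds
  have hq0 : 0 < q := by
    rw [hq]
    apply mul_pos _ hlampos
    apply div_pos hϵ'0
    positivity
  have hq1 : q < 1 := by
    rw [hq]
    have h1 : (1:ℝ) ≤ (1 + δ) ^ 2 := by nlinarith
    have : ϵ' / (1 + δ) ^ 2 ≤ ϵ' := by
      rw [div_le_iff₀ (by positivity)]
      nlinarith
    nlinarith [hlampos, hlamle1]
  -- residual recursion
  have hrstep : ∀ k, r (k + 1) = fun l => r k l - chat k (p (k + 1)) * D l (p (k + 1)) := by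
    intro k
    funext l
    rw [hr, hr, hcrec]
    simp only [Pi.sub_apply, Matrix.mulVec, dotProduct, Pi.add_apply, mul_add,
      Finset.sum_add_distrib]
    have hsing : ∑ i, D l i * (Pi.single (p (k+1)) (chat k (p (k+1))) : Fin P → ℂ) i
        = D l (p (k+1)) * chat k (p (k+1)) := by
      simp [Pi.single_apply, mul_ite, Finset.sum_ite_eq']
    rw [hsing]; ring
  have hcip_step : ∀ k i, cip (r (k + 1)) (d i)
      = cip (r k) (d i) - chat k (p (k + 1)) * cip (d (p (k + 1))) (d i) := by
    intro k i
    rw [hrstep k]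
    exact cip_sub_mul (r k) (d (p (k+1))) (d i) _
  -- kout ≤ k
  have hkoutle : ∀ k, koutpre k ≤ k := by
    intro k
    induction k with
    | zero => simp [hkoutpre0]
    | succ n ih =>
      rw [hkoutrec n]
      by_cases hRn : R n
      · exact le_trans (le_of_eq (hresetT n hRn).2) (Nat.le_succ n)
      · exact le_trans (le_of_eq (hresetF n hRn).2.2) (le_trans ih (Nat.le_succ n))
  have hkoutle' : ∀ k, kout k ≤ k := by
    intro k
    by_cases hRk : R k
    · exact le_of_eq (hresetT k hRk).2
    · exact le_trans (le_of_eq (hresetF k hRk).2.2) (hkoutle k)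
  -- S nonneg
  have hSnonneg : ∀ k, 0 ≤ S k := by
    intro k
    rw [hS]
    exact Finset.sum_nonneg fun _ _ => norm_nonneg _
  -- error invariant
  have Key : ∀ k, ∀ i, ‖cpre k i - cip (r k) (d i)‖ ≤ ε * S k := by
    intro k
    induction k with
    | zero =>
      intro i
      have hr0 : r 0 = x := by rw [hr, hc0]; simp
      have hS0 : S 0 = 0 := by rw [hS, hkoutpre0]; simp
      rw [hr0, hS0, hcpre0 i]
      simp [hd]
    | succ n ih =>
      -- error bound for chat n
      have herr : ∀ i, ‖chat n i - cip (r n) (d i)‖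
          ≤ ε * ∑ l ∈ Finset.Icc (kout n + 1) n, ‖chat (l - 1) (p l)‖ := by
        intro i
        by_cases hRn : R n
        · obtain ⟨hch, hko⟩ := hresetT n hRn
          rw [hch, hko]
          simp [hd]
        · obtain ⟨hch, _, hko⟩ := hresetF n hRn
          rw [hch, hko, ← hS n]
          exact ih i
      intro i
      have hGdiff : ‖G i (p (n+1)) - Gε i (p (n+1))‖ ≤ ε := by
        rw [hGε]
        split
        · simp [hε0.le]
        · next h => simpa using not_lt.mp h
      have hSsucc : S (n + 1) = (∑ l ∈ Finset.Icc (kout n + 1) n, ‖chat (l - 1) (p l)‖)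
          + ‖chat n (p (n+1))‖ := by
        rw [hS, hkoutrec n]
        rw [Finset.sum_Icc_succ_top (Nat.succ_le_succ (hkoutle' n))]
        simp
      have heq : cpre (n+1) i - cip (r (n+1)) (d i)
          = (chat n i - cip (r n) (d i))
            + chat n (p (n+1)) * (cip (d (p (n+1))) (d i) - Gε i (p (n+1))) := by
        rw [hcprerec n, hcip_step n i]
        ring
      rw [heq]
      have hGG : cip (d (p (n+1))) (d i) = G i (p (n+1)) := (hG i (p (n+1))).symm
      calc ‖_‖ ≤ ‖chat n i - cip (r n) (d i)‖
            + ‖chat n (p (n+1)) * (cip (d (p (n+1))) (d i) - Gε i (p (n+1)))‖ :=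
              norm_add_le _ _
        _ ≤ ε * (∑ l ∈ Finset.Icc (kout n + 1) n, ‖chat (l - 1) (p l)‖)
            + ‖chat n (p (n+1))‖ * ε := by
              apply add_le_add (herr i)
              rw [norm_mul, hGG]
              exact mul_le_mul_of_nonneg_left hGdiff (norm_nonneg _)
        _ = ε * S (n+1) := by rw [hSsucc]; ring
  -- δ-relative error bound for chat
  have hdelta : ∀ k i, ‖chat k i - cip (r k) (d i)‖
      ≤ δ * ‖chat k (p (k + 1))‖ := by
    intro k i
    by_cases hRk : R k
    · obtain ⟨hch, _⟩ := hresetT k hRk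
      rw [hch]
      simp [hd]
      positivity
    · obtain ⟨hch, hpp, _⟩ := hresetF k hRk
      have hnR := (hR k).not.mp hRk
      push_neg at hnR
      have h1 : ε / δ * S k ≤ ‖cpre k (ppre (k+1))‖ := hnR.1
      have h2 : ε * S k ≤ δ * ‖cpre k (ppre (k+1))‖ := by
        have := mul_le_mul_of_nonneg_left h1 hδ0.le
        calc ε * S k = δ * (ε / δ * S k) := by field_simp
          _ ≤ δ * ‖cpre k (ppre (k+1))‖ := this
      rw [hch, hpp]
      exact le_trans (Key k i) h2
  -- decay
  have hdecay : ∀ k, ‖(WithLp.equiv 2 (Fin L → ℂ)).symm (r (k + 1))‖ ^ 2 ≤ (1 - q) * ‖(WithLp.equiv 2 (Fin L → ℂ)).symm (r k)‖ ^ 2 := by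
    intro k
    set j := p (k + 1) with hj
    set ch := chat k j with hch
    set a : Fin P → ℂ := fun i => cip (r k) (d i) with ha
    have he : ‖a j - ch‖ ≤ δ * ‖ch‖ := by
      have := hdelta k j
      rw [← norm_neg]
      simpa [neg_sub] using this
    have hsplit : (WithLp.equiv 2 (Fin L → ℂ)).symm (r (k+1)) = (WithLp.equiv 2 (Fin L → ℂ)).symm (r k) - ch • (WithLp.equiv 2 (Fin L → ℂ)).symm (d j) := by
      rw [hrstep k]; rfl
    have hnormexp : ‖(WithLp.equiv 2 (Fin L → ℂ)).symm (r (k+1))‖ ^ 2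
        = ‖(WithLp.equiv 2 (Fin L → ℂ)).symm (r k)‖ ^ 2 - 2 * Complex.re (ch * conj (a j)) + ‖ch‖ ^ 2 := by
      rw [hsplit, @norm_sub_sq ℂ]
      have h1 : @inner ℂ _ _ ((WithLp.equiv 2 (Fin L → ℂ)).symm (r k)) (ch • (WithLp.equiv 2 (Fin L → ℂ)).symm (d j)) = ch * conj (a j) := by
        rw [inner_smul_right]
        congr 1
        rw [ha]
        simp only [cip_eq_inner]
        rw [← inner_conj_symm]
      have h2 : ‖ch • (WithLp.equiv 2 (Fin L → ℂ)).symm (d j)‖ ^ 2 = ‖ch‖ ^ 2 := by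
        rw [norm_smul, hDnorm' j]
        simp
      rw [h1, h2]
      simp [RCLike.re_to_complex]
    have hkey2 : ‖(WithLp.equiv 2 (Fin L → ℂ)).symm (r (k+1))‖ ^ 2 ≤ ‖(WithLp.equiv 2 (Fin L → ℂ)).symm (r k)‖ ^ 2 - (1 - 2*δ) * ‖ch‖ ^ 2 := by
      have := abs_step (a j) ch δ he
      rw [hnormexp]
      linarith
    by_cases hrk0 : r k = 0
    · have haj : a j = 0 := by rw [ha, hrk0]; exact cip_zero _
      have hch0 : ‖ch‖ = 0 := by
        have h7 := he
        rw [haj] at h7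
        simp only [zero_sub, norm_neg] at h7
        have h8 : ‖ch‖ ≤ 0 := by nlinarith
        exact le_antisymm h8 (norm_nonneg ch)
      have : ‖(WithLp.equiv 2 (Fin L → ℂ)).symm (r k)‖ = 0 := by
        have hz : (WithLp.equiv 2 (Fin L → ℂ)).symm (r k) = 0 := by rw [hrk0]; rfl
        rw [hz, norm_zero]
      rw [this] at hkey2 ⊢
      nlinarith [hkey2, norm_nonneg ch]
    · have hnr : 0 < ‖(WithLp.equiv 2 (Fin L → ℂ)).symm (r k)‖ := by
        apply norm_pos_iff.mpr
        intro h
        exact hrk0 ((WithLp.equiv 2 (Fin L → ℂ)).symm.injective (by rw [h]; rfl))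
      set nr := ‖(WithLp.equiv 2 (Fin L → ℂ)).symm (r k)‖ with hnrdef
      have hup : ∀ i, ‖a i‖ ≤ (1 + δ) * ‖ch‖ := by
        intro i
        calc ‖a i‖ = ‖chat k i - (chat k i - a i)‖ := by ring_nf
          _ ≤ ‖chat k i‖ + ‖chat k i - a i‖ := by
              rw [sub_eq_add_neg]
              refine le_trans (norm_add_le _ _) ?_
              rw [norm_neg]
          _ ≤ ‖ch‖ + δ * ‖ch‖ := add_le_add (hp k i) (hdelta k i)
          _ = (1 + δ) * ‖ch‖ := by ring
      have hmin : lammin * nr ^ 2 ≤ ((1 + δ) * ‖ch‖) ^ 2 := by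
        set y : Fin L → ℂ := fun l => (↑(nr⁻¹) : ℂ) * r k l with hy
        have hyunit : nrm y = 1 := by
          rw [nrm_eq_norm]
          have : (WithLp.equiv 2 (Fin L → ℂ)).symm y = (↑(nr⁻¹) : ℂ) • (WithLp.equiv 2 (Fin L → ℂ)).symm (r k) := rfl
          rw [this, norm_smul]
          simp only [Complex.norm_real, Real.norm_eq_abs, abs_inv]
          rw [← hnrdef, abs_of_pos hnr]
          field_simp
        have hcy : ∀ i, cip y (d i) = (↑(nr⁻¹) : ℂ) * a i := fun i => cip_const_mul _ _ _
        have hfy : f y ≤ ((1 + δ) * ‖ch‖ / nr) ^ 2 := by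
          apply hf_le
          intro i
          rw [hcy i, norm_mul]
          have h1 : ‖(↑(nr⁻¹) : ℂ)‖ = nr⁻¹ := by
            rw [Complex.norm_real, Real.norm_eq_abs, abs_of_pos (inv_pos.mpr hnr)]
          rw [h1]
          apply pow_le_pow_left₀ (mul_nonneg (inv_nonneg.mpr hnr.le) (norm_nonneg _))
          calc nr⁻¹ * ‖a i‖ ≤ nr⁻¹ * ((1 + δ) * ‖ch‖) :=
                mul_le_mul_of_nonneg_left (hup i) (inv_nonneg.mpr hnr.le)
            _ = (1 + δ) * ‖ch‖ / nr := by rw [inv_mul_eq_div]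
        have h5 : lammin ≤ ((1 + δ) * ‖ch‖ / nr) ^ 2 :=
          le_trans (hlam_le y hyunit) hfy
        calc lammin * nr ^ 2 ≤ ((1 + δ) * ‖ch‖ / nr) ^ 2 * nr ^ 2 :=
              mul_le_mul_of_nonneg_right h5 (sq_nonneg nr)
          _ = ((1 + δ) * ‖ch‖) ^ 2 := by field_simp
      -- combine
      have hcb : lammin * nr ^ 2 / (1 + δ) ^ 2 ≤ ‖ch‖ ^ 2 := by
        rw [div_le_iff₀ (by positivity)]
        calc lammin * nr ^ 2 ≤ ((1 + δ) * ‖ch‖) ^ 2 := hmin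
          _ = ‖ch‖ ^ 2 * (1 + δ) ^ 2 := by ring
      have e1 : ϵ' * ‖ch‖ ^ 2 ≤ (1 - 2*δ) * ‖ch‖ ^ 2 :=
        mul_le_mul_of_nonneg_right hϵ'.le (sq_nonneg _)
      have e2 : q * nr ^ 2 ≤ ϵ' * ‖ch‖ ^ 2 := by
        have heq2 : q * nr ^ 2 = ϵ' * (lammin * nr ^ 2 / (1 + δ) ^ 2) := by
          rw [hq]; field_simp
        rw [heq2]
        exact mul_le_mul_of_nonneg_left hcb hϵ'0.le
      linarith [hkey2, e1, e2]
  -- geometric decay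
  have hr0 : r 0 = x := by rw [hr, hc0]; simp
  have h1q0 : (0:ℝ) < 1 - q := by linarith
  have hgeo : ∀ k, ‖(WithLp.equiv 2 (Fin L → ℂ)).symm (r k)‖ ^ 2 ≤ (1 - q) ^ k * ‖(WithLp.equiv 2 (Fin L → ℂ)).symm x‖ ^ 2 := by
    intro k
    induction k with
    | zero => simp [hr0]
    | succ n ih =>
      calc ‖(WithLp.equiv 2 (Fin L → ℂ)).symm (r (n + 1))‖ ^ 2 ≤ (1 - q) * ‖(WithLp.equiv 2 (Fin L → ℂ)).symm (r n)‖ ^ 2 := hdecay n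
        _ ≤ (1 - q) * ((1 - q) ^ n * ‖(WithLp.equiv 2 (Fin L → ℂ)).symm x‖ ^ 2) := mul_le_mul_of_nonneg_left ih h1q0.le
        _ = (1 - q) ^ (n + 1) * ‖(WithLp.equiv 2 (Fin L → ℂ)).symm x‖ ^ 2 := by ring
  -- conclusion
  intro k hk
  have hxn : 0 < ‖(WithLp.equiv 2 (Fin L → ℂ)).symm x‖ := by
    apply norm_pos_iff.mpr
    intro h
    exact hx ((WithLp.equiv 2 (Fin L → ℂ)).symm.injective (by rw [h]; rfl))
  have hlog : Real.log (1 - q) < 0 := Real.log_neg h1q0 (by linarith)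
  have hklog : (k : ℝ) * Real.log (1 - q) < Real.log E := by
    have := (div_lt_iff_of_neg hlog).mp hk
    linarith
  have hpow : (1 - q) ^ k < E := by
    have hpos : (0:ℝ) < (1 - q) ^ k := pow_pos h1q0 k
    have : Real.log ((1 - q) ^ k) < Real.log E := by
      rw [Real.log_pow]
      exact_mod_cast hklog
    calc (1 - q) ^ k = Real.exp (Real.log ((1 - q) ^ k)) := (Real.exp_log hpos).symm
      _ < Real.exp (Real.log E) := Real.exp_lt_exp.mpr this
      _ = E := Real.exp_log hE0
  rw [nrm_eq_norm, nrm_eq_norm]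
  calc ‖(WithLp.equiv 2 (Fin L → ℂ)).symm (r k)‖ ^ 2 ≤ (1 - q) ^ k * ‖(WithLp.equiv 2 (Fin L → ℂ)).symm x‖ ^ 2 := hgeo k
    _ < E * ‖(WithLp.equiv 2 (Fin L → ℂ)).symm x‖ ^ 2 := by
        apply mul_lt_mul_of_pos_right hpow
        positivity
end

section
/- If ε·Σ_k ≤ δ·|ĉ_k(p_{k+1})| for some δ > 0, then the magnitude of the selected coefficient dominates all true analysis coefficients of the residual up to the factor (1+δ): max_p |⟨r_k, d_p⟩| ≤ (1+δ)·|ĉ_k(p_{k+1})|. -/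
open scoped BigOperators
open ComplexConjugate

lemma cip_sub {L : ℕ} (u v w : Fin L → ℂ) : cip (u - v) w = cip u w - cip v w := by
  simp [cip, sub_mul, Finset.sum_sub_distrib]

/-- if `ε·Σ_k ≤ δ·|ĉ_k(p_{k+1})|` for some `δ > 0`, then the magnitude of
the selected coefficient dominates all true analysis coefficients of the residual up to the
factor `(1+δ)`: `max_p |⟨r_k, d_p⟩| ≤ (1+δ)·|ĉ_k(p_{k+1})|`. -/
theorem approx_cdmp_selected_coefficient_dominates
    {L P : ℕ} (hL : 0 < L) (hP : 0 < P)
    (x : Fin L → ℂ) (D : Matrix (Fin L) (Fin P) ℂ)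
    (hDnorm : ∀ q, nrm (fun l => D l q) = 1)
    (ε δ : ℝ) (hε : 0 < ε) (hδ : 0 < δ)
    (G Gε : Matrix (Fin P) (Fin P) ℂ)
    (hG : ∀ i j, G i j = cip (fun l => D l j) (fun l => D l i))
    (hGε : ∀ i j, Gε i j = if ε < ‖G i j‖ then G i j else 0)
    (c chat : ℕ → Fin P → ℂ) (p : ℕ → Fin P)
    (hc0 : c 0 = 0)
    (hchat0 : ∀ i, chat 0 i = cip x (fun l => D l i))
    (hp : ∀ k i, ‖chat k i‖ ≤ ‖chat k (p (k + 1))‖)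
    (hchatrec : ∀ k, chat (k + 1) = fun i => chat k i - chat k (p (k + 1)) * Gε i (p (k + 1)))
    (hcrec : ∀ k, c (k + 1) = c k + Pi.single (p (k + 1)) (chat k (p (k + 1))))
    (r : ℕ → Fin L → ℂ) (hr : ∀ k, r k = x - D.mulVec (c k))
    (S : ℕ → ℝ)
    (hS : ∀ k, S k = ∑ l ∈ Finset.range k, ‖chat l (p (l + 1))‖)
    (k : ℕ)
    (hεS : ε * S k ≤ δ * ‖chat k (p (k + 1))‖) :
    ∀ i, ‖cip (r k) (fun l => D l i)‖ ≤ (1 + δ) * ‖chat k (p (k + 1))‖ := by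
  have key : ∀ k, ∀ i, ‖cip (r k) (fun l => D l i) - chat k i‖ ≤ ε * S k := by
    intro k
    induction k with
    | zero =>
      intro i
      rw [hr 0, hc0, hchat0 i, hS]
      simp [Matrix.mulVec_zero]
    | succ n ih =>
      intro i
      set j := p (n + 1)
      set a := chat n j with ha
      have hres : r (n + 1) = r n - D.mulVec (Pi.single j a) := by
        rw [hr, hr, hcrec]
        simp [Matrix.mulVec_add, sub_sub]
        rfl
      have hmul : cip (D.mulVec (Pi.single j a)) (fun l => D l i) = a * G i j := by
        rw [hG]
        simp only [cip, Matrix.mulVec_single]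
        rw [Finset.mul_sum]
        congr 1
        ext l
        simp only [Pi.smul_apply, op_smul_eq_mul, Matrix.col_apply]
        ring
      have hdiff : cip (r (n + 1)) (fun l => D l i) - chat (n + 1) i
          = (cip (r n) (fun l => D l i) - chat n i) - a * (G i j - Gε i j) := by
        rw [hres, cip_sub, hmul, hchatrec]
        ring
      have hGbound : ‖G i j - Gε i j‖ ≤ ε := by
        rw [hGε]
        split
        · simp [hε.le]
        · next h =>
          simpa using le_of_not_gt h
      calc ‖cip (r (n + 1)) (fun l => D l i) - chat (n + 1) i‖
          ≤ ‖cip (r n) (fun l => D l i) - chat n i‖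
            + ‖a‖ * ‖G i j - Gε i j‖ := by
            rw [hdiff]
            refine (norm_sub_le _ _).trans ?_
            rw [norm_mul]
        _ ≤ ε * S n + ‖a‖ * ε := by
            gcongr
            exact ih i
        _ = ε * S (n + 1) := by
            rw [hS, hS, Finset.sum_range_succ, ← hS]
            ring
  intro i
  have h1 := key k i
  have h2 := hp k i
  calc ‖cip (r k) (fun l => D l i)‖
      = ‖(cip (r k) (fun l => D l i) - chat k i) + chat k i‖ := by ring_nf
    _ ≤ ‖cip (r k) (fun l => D l i) - chat k i‖ + ‖chat k i‖ :=
        norm_add_le _ _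
    _ ≤ ε * S k + ‖chat k (p (k + 1))‖ := by gcongr
    _ ≤ δ * ‖chat k (p (k + 1))‖ + ‖chat k (p (k + 1))‖ := by gcongr
    _ = (1 + δ) * ‖chat k (p (k + 1))‖ := by ring
end

section
/- Immediately after a reset the second reset condition cannot hold: if r ∈ ℂ^L, r ≠ 0, ĉ = D*r, and p* is an index with |ĉ(q)| ≤ |ĉ(p*)| for all q, then |ĉ(p*)| > (2δ/(1−(2δ+ϵ')))·‖r‖₂. -/
open scoped BigOperators
open ComplexConjugate

lemma nrm_pos {L : ℕ} {r : Fin L → ℂ} (hr : r ≠ 0) : 0 < nrm r := by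
  have hne : ∃ l, r l ≠ 0 := by
    by_contra h
    push_neg at h
    exact hr (funext h)
  obtain ⟨l, hl⟩ := hne
  have hsum : 0 < ∑ l, ‖r l‖ ^ 2 := by
    apply Finset.sum_pos' (fun i _ => by positivity)
    exact ⟨l, Finset.mem_univ l, pow_pos (norm_pos_iff.mpr hl) 2⟩
  exact Real.sqrt_pos.mpr hsum

lemma nrm_smul {L : ℕ} (c : ℝ) (hc : 0 ≤ c) (r : Fin L → ℂ) :
    nrm (fun l => (c : ℂ) * r l) = c * nrm r := by
  unfold nrm
  have : ∀ l, ‖(c : ℂ) * r l‖ ^ 2 = c ^ 2 * ‖r l‖ ^ 2 := by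
    intro l
    rw [norm_mul, Complex.norm_real, Real.norm_of_nonneg hc]
    ring
  simp only [this, ← Finset.mul_sum]
  rw [Real.sqrt_mul (by positivity), Real.sqrt_sq hc]

lemma cip_smul {L : ℕ} (a : ℂ) (r v : Fin L → ℂ) :
    cip (fun l => a * r l) v = a * cip r v := by
  unfold cip
  rw [Finset.mul_sum]
  exact Finset.sum_congr rfl fun l _ => by ring

/-- immediately after a reset, the second reset condition cannot hold:
if `r ≠ 0`, `ĉ = D*r`, and `p*` maximizes `|ĉ(q)|`, then
`|ĉ(p*)| > (2δ/(1−(2δ+ϵ')))·‖r‖₂`. -/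
theorem reset_condition_cannot_hold_after_reset
    {L P : ℕ} (hL : 0 < L) (hP : 0 < P)
    (D : Matrix (Fin L) (Fin P) ℂ)
    (hDnorm : ∀ q, nrm (fun l => D l q) = 1)
    (hspan : Submodule.span ℂ (Set.range fun q => (fun l => D l q)) = ⊤)
    (lammin : ℝ)
    (hlam : lammin = ⨅ y : {y : Fin L → ℂ // nrm y = 1},
      ⨆ q : Fin P, ‖cip (y : Fin L → ℂ) (fun l => D l q)‖ ^ 2)
    (δ ϵ' : ℝ) (hδ0 : 0 < δ) (hδ : δ < 1 / 2)
    (hϵ'0 : 0 < ϵ') (hϵ' : ϵ' < 1 - 2 * δ)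
    (hconstr : 2 * δ / (1 - (2 * δ + ϵ')) < Real.sqrt lammin)
    (r : Fin L → ℂ) (hr : r ≠ 0)
    (chat : Fin P → ℂ) (hchat : ∀ i, chat i = cip r (fun l => D l i))
    (pstar : Fin P) (hpstar : ∀ i, ‖chat i‖ ≤ ‖chat pstar‖) :
    2 * δ / (1 - (2 * δ + ϵ')) * nrm r < ‖chat pstar‖ := by
  have hnr : 0 < nrm r := nrm_pos hr
  set y : Fin L → ℂ := fun l => ((nrm r)⁻¹ : ℂ) * r l with hy
  have hyn : nrm y = 1 := by
    rw [hy]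
    simp only [← Complex.ofReal_inv]
    rw [nrm_smul _ (by positivity)]
    field_simp
  -- lammin ≤ sup at y
  haveI : Nonempty (Fin P) := ⟨⟨0, hP⟩⟩
  have hbdd : BddBelow (Set.range fun y : {y : Fin L → ℂ // nrm y = 1} =>
      ⨆ q : Fin P, ‖cip (y : Fin L → ℂ) (fun l => D l q)‖ ^ 2) := by
    refine ⟨0, ?_⟩
    rintro x ⟨z, rfl⟩
    exact le_ciSup_of_le (Set.finite_range _).bddAbove ⟨0, hP⟩ (by positivity)
  have h1 : lammin ≤ ⨆ q : Fin P, ‖cip y (fun l => D l q)‖ ^ 2 := by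
    rw [hlam]
    exact ciInf_le hbdd ⟨y, hyn⟩
  have h2 : (⨆ q : Fin P, ‖cip y (fun l => D l q)‖ ^ 2)
      ≤ (‖chat pstar‖ / nrm r) ^ 2 := by
    apply ciSup_le
    intro q
    have : cip y (fun l => D l q) = ((nrm r)⁻¹ : ℂ) * cip r (fun l => D l q) :=
      cip_smul _ _ _
    rw [this, norm_mul, ← hchat q, norm_inv, Complex.norm_real,
      Real.norm_of_nonneg hnr.le, inv_mul_eq_div, div_pow, div_pow]
    gcongr
    exact hpstar q
  have hsq : Real.sqrt lammin ≤ ‖chat pstar‖ / nrm r := by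
    have := Real.sqrt_le_sqrt (le_trans h1 h2)
    rwa [Real.sqrt_sq (by positivity)] at this
  have : 2 * δ / (1 - (2 * δ + ϵ')) < ‖chat pstar‖ / nrm r :=
    lt_of_lt_of_le hconstr hsq
  calc 2 * δ / (1 - (2 * δ + ϵ')) * nrm r
      < (‖chat pstar‖ / nrm r) * nrm r := by
        exact mul_lt_mul_of_pos_right this hnr
    _ = ‖chat pstar‖ := by field_simp
end
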